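/- Let v₁, v₂ ∈ ℝ² be linearly independent and let Λ = {a·v₁ + b·v₂ : a, b ∈ ℤ}. Suppose ⋃_{p∈Λ} closedBall(p, 1) = ℝ². Then the density of the corresponding lattice family of unit disks exists and equals π/det(Λ): the function λ ↦ N_Λ(λ)·π/(4λ²) tends to π/det(Λ) as λ → ∞, where det(Λ) = |v₁.1·v₂.2 − v₁.2·v₂.1|. -/

import Mathlib

open Metric Filter Real

noncomputable section

/-- The Euclidean plane. -/
abbrev Pt := EuclideanSpace ℝ (Fin 2)

/-- The open square `(−λ,λ) × (−λ,λ)`. -/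
def openSquare (l : ℝ) : Set Pt := {p | |p 0| < l ∧ |p 1| < l}

/-- The lattice generated by `v₁` and `v₂`. -/
def lattice (v₁ v₂ : Pt) : Set Pt := {p | ∃ a b : ℤ, p = (a : ℝ) • v₁ + (b : ℝ) • v₂}

/-- The determinant of the lattice generated by `v₁` and `v₂`. -/
def latticeDet (v₁ v₂ : Pt) : ℝ := |v₁ 0 * v₂ 1 - v₁ 1 * v₂ 0|

/-- `N_Λ(λ)`: the number of pairs `(a, b) ∈ ℤ × ℤ` such that the closed unit ball centered at
`a·v₁ + b·v₂` meets the open square `(−λ,λ) × (−λ,λ)`. -/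
def NcountLat (v₁ v₂ : Pt) (l : ℝ) : ℕ :=
  {q : ℤ × ℤ |
    (closedBall ((q.1 : ℝ) • v₁ + (q.2 : ℝ) • v₂) 1 ∩ openSquare l).Nonempty}.ncard

open MeasureTheory Submodule Pointwise ENNReal

namespace LatDensity

def T (v₁ v₂ : Pt) (q : ℤ × ℤ) : Pt := (q.1 : ℝ) • v₁ + (q.2 : ℝ) • v₂

lemma coord_le_norm (x : Pt) (i : Fin 2) : |x i| ≤ ‖x‖ := by
  rw [EuclideanSpace.norm_eq]
  rw [← Real.sqrt_sq_eq_abs]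
  apply Real.sqrt_le_sqrt
  rw [Fin.sum_univ_two]
  fin_cases i <;> simp [sq_abs] <;> positivity

lemma norm_le_of_mem_openSquare {l : ℝ} {x : Pt} (h : x ∈ openSquare l) : ‖x‖ ≤ 2 * |l| := by
  obtain ⟨h0, h1⟩ := h
  rw [EuclideanSpace.norm_eq, Fin.sum_univ_two]
  have h0' : |x 0| ≤ |l| := le_trans h0.le (le_abs_self l)
  have h1' : |x 1| ≤ |l| := le_trans h1.le (le_abs_self l)
  have : Real.sqrt (‖x 0‖ ^ 2 + ‖x 1‖ ^ 2) ≤ Real.sqrt ((2 * |l|) ^ 2) := by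
    apply Real.sqrt_le_sqrt
    simp only [Real.norm_eq_abs]
    nlinarith [abs_nonneg (x 0), abs_nonneg (x 1), abs_nonneg l]
  simpa [Real.sqrt_sq (by positivity : (0:ℝ) ≤ 2 * |l|)] using this

variable {v₁ v₂ : Pt} (hli : LinearIndependent ℝ ![v₁, v₂])

def bb (hli : LinearIndependent ℝ ![v₁, v₂]) : Module.Basis (Fin 2) ℝ Pt :=
  basisOfLinearIndependentOfCardEqFinrank hli (by simp)

lemma bb_zero : bb hli 0 = v₁ := by
  simp [bb, coe_basisOfLinearIndependentOfCardEqFinrank]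

lemma bb_one : bb hli 1 = v₂ := by
  simp [bb, coe_basisOfLinearIndependentOfCardEqFinrank]

lemma T_eq (q : ℤ × ℤ) : T v₁ v₂ q = (q.1 : ℝ) • bb hli 0 + (q.2 : ℝ) • bb hli 1 := by
  rw [bb_zero, bb_one]; rfl

lemma repr_T (q : ℤ × ℤ) (i : Fin 2) :
    (bb hli).repr (T v₁ v₂ q) i = ![(q.1 : ℝ), (q.2 : ℝ)] i := by
  rw [T_eq hli q]
  simp only [map_add, _root_.map_smul, Module.Basis.repr_self]
  fin_cases i <;> simp

include hli in
lemma T_inj : Function.Injective (T v₁ v₂) := by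
  intro q q' h
  have h0 := repr_T hli q 0
  have h0' := repr_T hli q' 0
  have h1 := repr_T hli q 1
  have h1' := repr_T hli q' 1
  rw [h] at h0 h1
  rw [h0'] at h0; rw [h1'] at h1
  simp at h0 h1
  exact Prod.ext h0.symm h1.symm

lemma mem_span_iff (x : Pt) :
    x ∈ span ℤ (Set.range (bb hli)) ↔ ∃ q : ℤ × ℤ, x = T v₁ v₂ q := by
  have hr : Set.range (bb hli) = {v₁, v₂} := by
    ext y
    simp only [Set.mem_range, Set.mem_insert_iff, Set.mem_singleton_iff]
    constructor
    · rintro ⟨i, rfl⟩; fin_cases i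
      · left; exact bb_zero hli
      · right; exact bb_one hli
    · rintro (rfl | rfl)
      · exact ⟨0, bb_zero hli⟩
      · exact ⟨1, bb_one hli⟩
  rw [hr, Submodule.mem_span_pair]
  constructor
  · rintro ⟨a, b, h⟩
    exact ⟨(a, b), by simp [T, ← h, ← Int.cast_smul_eq_zsmul ℝ]⟩
  · rintro ⟨⟨a, b⟩, rfl⟩
    exact ⟨a, b, by simp [T, ← Int.cast_smul_eq_zsmul ℝ]⟩

end LatDensity

section volstuff

open ENNReal

lemma measurableSet_openSquare (l : ℝ) : MeasurableSet (openSquare l) := by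
  have h0 : Measurable fun p : Pt => p 0 := by
    exact (continuous_apply (0 : Fin 2)).measurable.comp
      (MeasurableEquiv.toLp 2 (Fin 2 → ℝ)).symm.measurable
  have h1 : Measurable fun p : Pt => p 1 := by
    exact (continuous_apply (1 : Fin 2)).measurable.comp
      (MeasurableEquiv.toLp 2 (Fin 2 → ℝ)).symm.measurable
  exact (measurableSet_lt h0.abs measurable_const).inter
    (measurableSet_lt h1.abs measurable_const)

lemma openSquare_eq_preimage (l : ℝ) :
    openSquare l =
      (MeasurableEquiv.toLp 2 (Fin 2 → ℝ)).symm ⁻¹' (Set.univ.pi fun _ => Set.Ioo (-l) l) := by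
  ext p
  simp only [openSquare, Set.mem_setOf_eq, Set.mem_preimage, Set.mem_pi, Set.mem_univ,
    Set.mem_Ioo, forall_true_left, Fin.forall_fin_two, abs_lt]
  rfl

lemma volume_openSquare {l : ℝ} (hl : 0 ≤ l) :
    volume (openSquare l) = ENNReal.ofReal (4 * l ^ 2) := by
  rw [openSquare_eq_preimage,
    (EuclideanSpace.volume_preserving_symm_measurableEquiv_toLp (Fin 2)).measure_preimage
      (MeasurableSet.univ_pi fun _ => measurableSet_Ioo).nullMeasurableSet,
    volume_pi_pi]
  simp only [Real.volume_Ioo, Finset.prod_const, Finset.card_univ, Fintype.card_fin]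
  rw [sub_neg_eq_add, ← ENNReal.ofReal_pow (by linarith)]
  congr 1
  ring

end volstuff

namespace LatDensity

variable {v₁ v₂ : Pt} (hli : LinearIndependent ℝ ![v₁, v₂])

def FD (hli : LinearIndependent ℝ ![v₁, v₂]) : Set Pt := ZSpan.fundamentalDomain (bb hli)

include hli in
lemma latticeDet_pos : 0 < latticeDet v₁ v₂ := by
  have hb0 : Module.Basis (Fin 2) ℝ Pt := (EuclideanSpace.basisFun (Fin 2) ℝ).toBasis
  have h : ((EuclideanSpace.basisFun (Fin 2) ℝ).toBasis.det (bb hli)) ≠ 0 :=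
    IsUnit.ne_zero (Module.Basis.isUnit_det _ _)
  have hdet : ((EuclideanSpace.basisFun (Fin 2) ℝ).toBasis.det (bb hli)) =
      v₁ 0 * v₂ 1 - v₁ 1 * v₂ 0 := by
    rw [Module.Basis.det_apply, Matrix.det_fin_two]
    simp only [Module.Basis.toMatrix_apply, OrthonormalBasis.coe_toBasis_repr_apply,
      EuclideanSpace.basisFun_repr, bb_zero hli, bb_one hli]
    ring
  rw [latticeDet]
  rw [hdet] at h
  exact abs_pos.mpr h

lemma volume_FD : volume (FD hli) = ENNReal.ofReal (latticeDet v₁ v₂) := by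
  rw [FD, ZSpan.measure_fundamentalDomain (bb hli) volume
    (EuclideanSpace.basisFun (Fin 2) ℝ).toBasis]
  have h1 : volume (ZSpan.fundamentalDomain (EuclideanSpace.basisFun (Fin 2) ℝ).toBasis) = 1 := by
    have : ZSpan.fundamentalDomain (EuclideanSpace.basisFun (Fin 2) ℝ).toBasis =
        (MeasurableEquiv.toLp 2 (Fin 2 → ℝ)).symm ⁻¹' (Set.univ.pi fun _ => Set.Ico (0:ℝ) 1) := by
      ext p
      simp only [ZSpan.fundamentalDomain, Set.mem_setOf_eq, Set.mem_preimage, Set.mem_pi,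
        Set.mem_univ, forall_true_left, OrthonormalBasis.coe_toBasis_repr_apply,
        EuclideanSpace.basisFun_repr]
      rfl
    rw [this,
      (EuclideanSpace.volume_preserving_symm_measurableEquiv_toLp (Fin 2)).measure_preimage
        (MeasurableSet.univ_pi fun _ => measurableSet_Ico).nullMeasurableSet,
      volume_pi_pi]
    simp
  rw [h1, mul_one]
  congr 1
  rw [latticeDet, Module.Basis.det_apply, Matrix.det_fin_two]
  simp only [Module.Basis.toMatrix_apply, OrthonormalBasis.coe_toBasis_repr_apply,
    EuclideanSpace.basisFun_repr, bb_zero hli, bb_one hli]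
  congr 1
  ring

end LatDensity

open Pointwise ENNReal

namespace LatDensity

variable {v₁ v₂ : Pt} (hli : LinearIndependent ℝ ![v₁, v₂])

def Rbd (v₁ v₂ : Pt) : ℝ := |v₁ 0| + |v₁ 1| + |v₂ 0| + |v₂ 1|

lemma Rbd_nonneg : 0 ≤ Rbd v₁ v₂ := by
  unfold Rbd; positivity

lemma FD_coord {y : Pt} (hy : y ∈ FD hli) (i : Fin 2) : |y i| ≤ Rbd v₁ v₂ := by
  have hrepr := (bb hli).sum_repr y
  rw [Fin.sum_univ_two, bb_zero hli, bb_one hli] at hrepr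
  have h0 : (bb hli).repr y 0 ∈ Set.Ico (0:ℝ) 1 := hy 0
  have h1 : (bb hli).repr y 1 ∈ Set.Ico (0:ℝ) 1 := hy 1
  have hyi : y i = (bb hli).repr y 0 * v₁ i + (bb hli).repr y 1 * v₂ i := by
    conv_lhs => rw [← hrepr]
    simp [PiLp.add_apply, PiLp.smul_apply]
  rw [hyi]
  have e0 := abs_nonneg (v₁ i); have e1 := abs_nonneg (v₂ i)
  have b0 : |(bb hli).repr y 0 * v₁ i| ≤ |v₁ i| := by
    rw [abs_mul]
    calc |(bb hli).repr y 0| * |v₁ i| ≤ 1 * |v₁ i| := by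
          apply mul_le_mul_of_nonneg_right _ e0
          rw [abs_of_nonneg h0.1]; exact h0.2.le
      _ = |v₁ i| := one_mul _
  have b1 : |(bb hli).repr y 1 * v₂ i| ≤ |v₂ i| := by
    rw [abs_mul]
    calc |(bb hli).repr y 1| * |v₂ i| ≤ 1 * |v₂ i| := by
          apply mul_le_mul_of_nonneg_right _ e1
          rw [abs_of_nonneg h1.1]; exact h1.2.le
      _ = |v₂ i| := one_mul _
  have := abs_add_le ((bb hli).repr y 0 * v₁ i) ((bb hli).repr y 1 * v₂ i)
  have hiv : |v₁ i| + |v₂ i| ≤ Rbd v₁ v₂ := by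
    unfold Rbd; fin_cases i <;> simp <;> nlinarith [abs_nonneg (v₁ 0), abs_nonneg (v₁ 1),
      abs_nonneg (v₂ 0), abs_nonneg (v₂ 1)]
  linarith

lemma cells_disjoint {q q' : ℤ × ℤ} (h : q ≠ q') :
    Disjoint (T v₁ v₂ q +ᵥ FD hli) (T v₁ v₂ q' +ᵥ FD hli) := by
  rw [Set.disjoint_left]
  rintro x hx hx'
  obtain ⟨f, hf, rfl⟩ := hx
  obtain ⟨f', hf', hx'⟩ := hx'
  simp only [vadd_eq_add] at hx' ⊢
  have hspan : ∀ p : ℤ × ℤ, T v₁ v₂ p ∈ span ℤ (Set.range (bb hli)) :=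
    fun p => (mem_span_iff hli _).mpr ⟨p, rfl⟩
  have hff' : f = f' := by
    have e1 : ZSpan.fract (bb hli) (T v₁ v₂ q + f) = f := by
      rw [ZSpan.fract_zSpan_add (bb hli) f (hspan q)]
      exact (ZSpan.fract_eq_self (b := bb hli)).mpr hf
    have e2 : ZSpan.fract (bb hli) (T v₁ v₂ q' + f') = f' := by
      rw [ZSpan.fract_zSpan_add (bb hli) f' (hspan q')]
      exact (ZSpan.fract_eq_self (b := bb hli)).mpr hf'
    rw [← e1, ← e2, hx']
  apply h
  apply T_inj hli
  have : T v₁ v₂ q' + f' = T v₁ v₂ q + f := hx'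
  rw [hff'] at this
  exact (add_left_injective f' this).symm

include hli in
lemma cells_cover (x : Pt) : ∃ q : ℤ × ℤ, x ∈ T v₁ v₂ q +ᵥ FD hli := by
  obtain ⟨q, hq⟩ := (mem_span_iff hli _).mp (ZSpan.floor (bb hli) x).2
  refine ⟨q, ⟨ZSpan.fract (bb hli) x, ZSpan.fract_mem_fundamentalDomain (bb hli) x, ?_⟩⟩
  simp only [vadd_eq_add]
  rw [ZSpan.fract_apply, ← hq]
  abel

include hli in
lemma finite_A (l : ℝ) : {q : ℤ × ℤ | T v₁ v₂ q ∈ openSquare l}.Finite := by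
  set L : Set Pt := (span ℤ (Set.range (bb hli)) : Set Pt) with hL
  have hdisc : DiscreteTopology (span ℤ (Set.range (bb hli))) := inferInstance
  have hclosed : IsClosed L :=
    AddSubgroup.isClosed_of_discrete (H := (span ℤ (Set.range (bb hli))).toAddSubgroup)
  have hcpt : IsCompact (L ∩ closedBall 0 (2 * |l|)) :=
    (isCompact_closedBall (0 : Pt) (2 * |l|)).inter_left hclosed
  have hdisc2 : DiscreteTopology (L ∩ closedBall (0:Pt) (2 * |l|) : Set Pt) :=
    DiscreteTopology.of_subset hdisc Set.inter_subset_left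
  have hfin : (L ∩ closedBall (0:Pt) (2 * |l|)).Finite := hcpt.finite (isDiscrete_iff_discreteTopology.mpr hdisc2)
  have hsub : {q : ℤ × ℤ | T v₁ v₂ q ∈ openSquare l} ⊆
      T v₁ v₂ ⁻¹' (L ∩ closedBall 0 (2 * |l|)) := by
    intro q hq
    refine ⟨(mem_span_iff hli _).mpr ⟨q, rfl⟩, ?_⟩
    rw [mem_closedBall, dist_zero_right]
    exact norm_le_of_mem_openSquare hq
  exact (hfin.preimage (Set.injOn_of_injective (T_inj hli))).subset hsub

def Acount (hli : LinearIndependent ℝ ![v₁, v₂]) (l : ℝ) : ℕ :=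
  {q : ℤ × ℤ | T v₁ v₂ q ∈ openSquare l}.ncard

lemma vol_biUnion (l : ℝ) :
    volume (⋃ q ∈ (finite_A hli l).toFinset, (T v₁ v₂ q +ᵥ FD hli)) =
      (Acount hli l : ℝ≥0∞) * ENNReal.ofReal (latticeDet v₁ v₂) := by
  rw [measure_biUnion_finset]
  · have : ∀ q : ℤ × ℤ, volume (T v₁ v₂ q +ᵥ FD hli) = ENNReal.ofReal (latticeDet v₁ v₂) := by
      intro q
      rw [measure_vadd, volume_FD hli]
    simp_rw [this]
    rw [Finset.sum_const, nsmul_eq_mul]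
    congr 1
    rw [Acount, Set.ncard_eq_toFinset_card _ (finite_A hli l)]
  · intro q hq q' hq' hne
    exact cells_disjoint hli hne
  · intro q hq
    exact (ZSpan.fundamentalDomain_measurableSet (bb hli)).const_vadd (T v₁ v₂ q)

lemma vol_upper {l : ℝ} (hl : 0 ≤ l) :
    (Acount hli l : ℝ) * latticeDet v₁ v₂ ≤ 4 * (l + Rbd v₁ v₂) ^ 2 := by
  have hsub : (⋃ q ∈ (finite_A hli l).toFinset, (T v₁ v₂ q +ᵥ FD hli)) ⊆
      openSquare (l + Rbd v₁ v₂) := by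
    intro x hx
    simp only [Set.mem_iUnion] at hx
    obtain ⟨q, hq, f, hf, rfl⟩ := hx
    rw [Set.Finite.mem_toFinset] at hq
    simp only [vadd_eq_add]
    refine ⟨?_, ?_⟩
    · rw [PiLp.add_apply]
      have h1 := abs_add_le (T v₁ v₂ q 0) (f 0)
      have h2 := FD_coord hli hf 0
      have h3 := hq.1
      linarith
    · rw [PiLp.add_apply]
      have h1 := abs_add_le (T v₁ v₂ q 1) (f 1)
      have h2 := FD_coord hli hf 1
      have h3 := hq.2
      linarith
  have hle := (measure_mono hsub).trans_eq
    (volume_openSquare (by linarith [Rbd_nonneg (v₁ := v₁) (v₂ := v₂)]))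
  rw [vol_biUnion hli l] at hle
  rw [← ENNReal.ofReal_natCast (Acount hli l),
    ← ENNReal.ofReal_mul (by positivity)] at hle
  exact (ENNReal.ofReal_le_ofReal_iff (by positivity)).mp hle

lemma vol_lower {l : ℝ} (hl : Rbd v₁ v₂ ≤ l) :
    4 * (l - Rbd v₁ v₂) ^ 2 ≤ (Acount hli l : ℝ) * latticeDet v₁ v₂ := by
  have hsub : openSquare (l - Rbd v₁ v₂) ⊆
      (⋃ q ∈ (finite_A hli l).toFinset, (T v₁ v₂ q +ᵥ FD hli)) := by
    intro x hx
    obtain ⟨q, f, hf, hfx⟩ := cells_cover hli x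
    simp only [vadd_eq_add] at hfx
    have hq : T v₁ v₂ q ∈ openSquare l := by
      have h0 : T v₁ v₂ q 0 = x 0 - f 0 := by
        rw [← hfx, PiLp.add_apply]; ring
      have h1 : T v₁ v₂ q 1 = x 1 - f 1 := by
        rw [← hfx, PiLp.add_apply]; ring
      refine ⟨?_, ?_⟩
      · rw [h0]
        have h1' := abs_sub (x 0) (f 0)
        have h2 := FD_coord hli hf 0
        have h3 := hx.1
        linarith
      · rw [h1]
        have h1' := abs_sub (x 1) (f 1)
        have h2 := FD_coord hli hf 1
        have h3 := hx.2
        linarith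
    refine Set.mem_biUnion ((finite_A hli l).mem_toFinset.mpr hq) ⟨f, hf, by
      simp only [vadd_eq_add]; exact hfx⟩
  have hge := (measure_mono hsub).trans_eq (vol_biUnion hli l)
  rw [volume_openSquare (by linarith)] at hge
  rw [← ENNReal.ofReal_natCast (Acount hli l),
    ← ENNReal.ofReal_mul (by positivity)] at hge
  refine (ENNReal.ofReal_le_ofReal_iff ?_).mp hge
  exact mul_nonneg (Nat.cast_nonneg _) (latticeDet_pos hli).le

end LatDensity

namespace LatDensity

variable {v₁ v₂ : Pt} (hli : LinearIndependent ℝ ![v₁, v₂])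

lemma Nset_subset (l : ℝ) :
    {q : ℤ × ℤ |
      (closedBall ((q.1 : ℝ) • v₁ + (q.2 : ℝ) • v₂) 1 ∩ openSquare l).Nonempty} ⊆
    {q : ℤ × ℤ | T v₁ v₂ q ∈ openSquare (l + 1)} := by
  rintro q ⟨x, hx1, hx2⟩
  have hd : dist x (T v₁ v₂ q) ≤ 1 := mem_closedBall.mp hx1
  rw [dist_eq_norm] at hd
  have key : ∀ i : Fin 2, |T v₁ v₂ q i| < l + 1 := by
    intro i
    have h1 : |x i - T v₁ v₂ q i| ≤ ‖x - T v₁ v₂ q‖ := by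
      have := coord_le_norm (x - T v₁ v₂ q) i
      simpa [PiLp.sub_apply] using this
    have h2 : |x i| < l := by fin_cases i <;> [exact hx2.1; exact hx2.2]
    calc |T v₁ v₂ q i| = |x i - (x i - T v₁ v₂ q i)| := by ring_nf
      _ ≤ |x i| + |x i - T v₁ v₂ q i| := abs_sub _ _
      _ < l + 1 := by linarith
  exact ⟨key 0, key 1⟩

include hli in
lemma A_le_N (l : ℝ) : Acount hli l ≤ NcountLat v₁ v₂ l := by
  apply Set.ncard_le_ncard
  · intro q hq
    exact ⟨T v₁ v₂ q, mem_closedBall_self (by norm_num), hq⟩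
  · exact (finite_A hli (l + 1)).subset (Nset_subset l)

include hli in
lemma N_le_A (l : ℝ) : NcountLat v₁ v₂ l ≤ Acount hli (l + 1) :=
  Set.ncard_le_ncard (Nset_subset l) (finite_A hli (l + 1))

end LatDensity


open LatDensity

/-- The density of a lattice family of unit disks covering the plane exists and equals
`π / det(Λ)`. -/
theorem lattice_density_eq (v₁ v₂ : Pt)
    (hli : LinearIndependent ℝ ![v₁, v₂])
    (hcover : (⋃ p ∈ lattice v₁ v₂, closedBall p 1) = Set.univ) :
    Filter.Tendsto (fun l : ℝ => (NcountLat v₁ v₂ l : ℝ) * π / (4 * l ^ 2))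
      Filter.atTop (nhds (π / latticeDet v₁ v₂)) := by

  set d := latticeDet v₁ v₂ with hd_def
  have hd : 0 < d := latticeDet_pos hli
  set R := Rbd v₁ v₂ with hR_def
  have hR : 0 ≤ R := Rbd_nonneg
  -- the two bounding functions
  have htend : ∀ c : ℝ, Filter.Tendsto (fun l : ℝ => π / d * (1 + c / l) ^ 2)
      Filter.atTop (nhds (π / d)) := by
    intro c
    have h0 : Filter.Tendsto (fun l : ℝ => c / l) Filter.atTop (nhds 0) :=
      tendsto_const_nhds.div_atTop tendsto_id
    have h1 : Filter.Tendsto (fun l : ℝ => (1 + c / l) ^ 2) Filter.atTop (nhds 1) := by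
      have := ((tendsto_const_nhds (x := (1:ℝ))).add h0).pow 2
      simpa using this
    have := (tendsto_const_nhds (x := π / d)).mul h1
    simpa using this
  have hlow := htend (-R)
  have hhigh := htend (1 + R)
  refine tendsto_of_tendsto_of_tendsto_of_le_of_le' hlow hhigh ?_ ?_
  · filter_upwards [eventually_ge_atTop (max R 1)] with l hl
    have hl1 : (1:ℝ) ≤ l := le_trans (le_max_right _ _) hl
    have hRl : R ≤ l := le_trans (le_max_left _ _) hl
    have hl0 : 0 < l := lt_of_lt_of_le one_pos hl1
    have hAN : (Acount hli l : ℝ) ≤ (NcountLat v₁ v₂ l : ℝ) := by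
      exact_mod_cast A_le_N hli l
    have hNl : 4 * (l - R) ^ 2 ≤ (NcountLat v₁ v₂ l : ℝ) * d :=
      le_trans (vol_lower hli hRl) (mul_le_mul_of_nonneg_right hAN hd.le)
    have h1 : 1 + -R / l = (l - R) / l := by
      field_simp
      ring
    have heq : π / d * (1 + -R / l) ^ 2 = π * (l - R) ^ 2 / (d * l ^ 2) := by
      rw [h1, div_pow, div_mul_div_comm]
    rw [heq, div_le_div_iff₀ (by positivity) (by positivity)]
    nlinarith [mul_le_mul_of_nonneg_left hNl (mul_nonneg pi_pos.le (sq_nonneg l)), pi_pos]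
  · filter_upwards [eventually_ge_atTop (max R 1)] with l hl
    have hl1 : (1:ℝ) ≤ l := le_trans (le_max_right _ _) hl
    have hl0 : 0 < l := lt_of_lt_of_le one_pos hl1
    have hNA : (NcountLat v₁ v₂ l : ℝ) ≤ (Acount hli (l + 1) : ℝ) := by
      exact_mod_cast N_le_A hli l
    have hNl : (NcountLat v₁ v₂ l : ℝ) * d ≤ 4 * (l + 1 + R) ^ 2 := by
      calc (NcountLat v₁ v₂ l : ℝ) * d ≤ (Acount hli (l + 1) : ℝ) * d :=
            mul_le_mul_of_nonneg_right hNA hd.le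
        _ ≤ 4 * ((l + 1) + R) ^ 2 := vol_upper hli (by linarith)
        _ = 4 * (l + 1 + R) ^ 2 := by ring
    have h1 : 1 + (1 + R) / l = (l + 1 + R) / l := by
      field_simp
      ring
    have heq : π / d * (1 + (1 + R) / l) ^ 2 = π * (l + 1 + R) ^ 2 / (d * l ^ 2) := by
      rw [h1, div_pow, div_mul_div_comm]
    rw [heq, div_le_div_iff₀ (by positivity) (by positivity)]
    nlinarith [mul_le_mul_of_nonneg_left hNl (mul_nonneg pi_pos.le (sq_nonneg l)), pi_pos]
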